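/- The function h(α) = ψ(1+α) - ψ(1+α/2) - 1/(2+α) is strictly increasing on (-1,1), where ψ is the digamma function. -/

import Mathlib

/-- The digamma function `ψ = Γ'/Γ`. -/
noncomputable def digamma (x : ℝ) : ℝ := deriv Real.Gamma x / Real.Gamma x

open Real Set Filter Topology

private lemma dig_ne (x : ℝ) (hx : 0 < x) : ∀ m : ℕ, x ≠ -m := by
  intro m
  have : (0:ℝ) ≤ m := Nat.cast_nonneg m
  exact ne_of_gt (by linarith)

private lemma dig_diff (x : ℝ) (hx : 0 < x) :
    DifferentiableAt ℝ (fun y => Real.log (Real.Gamma y)) x :=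
  (Real.differentiableAt_Gamma (dig_ne x hx)).log (Real.Gamma_ne_zero (dig_ne x hx))

private lemma digamma_eq (x : ℝ) (hx : 0 < x) :
    digamma x = deriv (fun y => Real.log (Real.Gamma y)) x := by
  rw [digamma, deriv.log (Real.differentiableAt_Gamma (dig_ne x hx))
    (Real.Gamma_pos_of_pos hx).ne']

private lemma digamma_rec (x : ℝ) (hx : 0 < x) :
    digamma (x + 1) = digamma x + 1 / x := by
  rw [digamma_eq _ (by linarith), digamma_eq _ hx]
  rw [← deriv_comp_add_const, one_div, ← Real.deriv_log,
    ← deriv_fun_add (dig_diff x hx) (Real.differentiableAt_log hx.ne')]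
  apply Filter.EventuallyEq.deriv_eq
  filter_upwards [eventually_gt_nhds hx] with y hy
  rw [Real.Gamma_add_one hy.ne', Real.log_mul hy.ne' (Real.Gamma_pos_of_pos hy).ne', add_comm]

private lemma digamma_mono {x y : ℝ} (hx : 0 < x) (hxy : x ≤ y) :
    digamma x ≤ digamma y := by
  rcases eq_or_lt_of_le hxy with rfl | hlt
  · exact le_rfl
  · rw [digamma_eq _ hx, digamma_eq _ (hx.trans hlt)]
    have hc : ConvexOn ℝ (Ioi 0) (fun y => Real.log (Real.Gamma y)) := by
      simpa [Function.comp_def] using Real.convexOn_log_Gamma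
    exact (hc.deriv_le_slope (mem_Ioi.mpr hx) (mem_Ioi.mpr (hx.trans hlt)) hlt
      (dig_diff x hx)).trans
      (hc.slope_le_deriv (mem_Ioi.mpr hx) (mem_Ioi.mpr (hx.trans hlt)) hlt
      (dig_diff y (hx.trans hlt)))

private lemma digamma_add_nat (x : ℝ) (hx : 0 < x) (n : ℕ) :
    digamma (x + n) = digamma x + ∑ k ∈ Finset.range n, 1 / (x + k) := by
  induction n with
  | zero => simp
  | succ n ih =>
    have h1 : x + (n + 1 : ℕ) = (x + n) + 1 := by push_cast; ring
    rw [h1, digamma_rec _ (by positivity), ih, Finset.sum_range_succ]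
    ring

private lemma digamma_diff_bound {x y : ℝ} (hx : 0 < x) (hxy : x ≤ y) (h2 : y ≤ x + 2) :
    0 ≤ digamma y - digamma x ∧ digamma y - digamma x ≤ 1 / x + 1 / (x + 1) := by
  constructor
  · linarith [digamma_mono hx hxy]
  · have h3 : digamma y ≤ digamma (x + 2) := digamma_mono (by linarith) h2
    have h4 : x + 2 = (x + 1) + 1 := by ring
    rw [h4, digamma_rec _ (by linarith), digamma_rec _ hx] at h3
    linarith

private lemma tendsto_aux (c : ℝ) (hc : 0 < c) :
    Tendsto (fun n : ℕ => 1 / (c + n)) atTop (𝓝 0) := by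
  have h : Tendsto (fun n : ℕ => c + (n : ℝ)) atTop atTop :=
    tendsto_atTop_add_const_left _ c tendsto_natCast_atTop_atTop
  simpa [one_div, Pi.inv_def] using h.inv_tendsto_atTop

private lemma key (a b : ℝ) (ha : -1 < a) (hb : b < 1) (hab : a < b) :
    0 ≤ (digamma (1 + b) - digamma (1 + b / 2)) -
      (digamma (1 + a) - digamma (1 + a / 2)) := by
  have ha1 : a < 1 := hab.trans hb
  have hb1 : -1 < b := ha.trans hab
  set D := (digamma (1 + b) - digamma (1 + b / 2)) -
      (digamma (1 + a) - digamma (1 + a / 2)) with hD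
  set R : ℕ → ℝ := fun n =>
    (digamma (1 + b + n) - digamma (1 + a + n)) -
    (digamma (1 + b / 2 + n) - digamma (1 + a / 2 + n)) with hR
  -- every R n is ≤ D
  have hRD : ∀ n, R n ≤ D := by
    intro n
    have e1 := digamma_add_nat (1 + a) (by linarith) n
    have e2 := digamma_add_nat (1 + b) (by linarith) n
    have e3 := digamma_add_nat (1 + a / 2) (by linarith) n
    have e4 := digamma_add_nat (1 + b / 2) (by linarith) n
    have hsum : 0 ≤ ∑ k ∈ Finset.range n,
        ((1 / (1 + a + k) - 1 / (1 + b + k)) - (1 / (1 + a / 2 + k) - 1 / (1 + b / 2 + k))) := by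
      apply Finset.sum_nonneg
      intro k _
      have hm : (0:ℝ) ≤ k := Nat.cast_nonneg k
      have p1 : (0:ℝ) < 1 + a + k := by linarith
      have p2 : (0:ℝ) < 1 + b + k := by linarith
      have p3 : (0:ℝ) < 1 + a / 2 + k := by linarith
      have p4 : (0:ℝ) < 1 + b / 2 + k := by linarith
      have hab2 : a * b < 1 := by
        nlinarith [mul_pos (by linarith : (0:ℝ) < 1 - a) (by linarith : (0:ℝ) < 1 - b),
          mul_pos (by linarith : (0:ℝ) < 1 + a) (by linarith : (0:ℝ) < 1 + b)]
      have hQ : (0:ℝ) < 2 * ((1 + a / 2 + k) * (1 + b / 2 + k)) - (1 + a + k) * (1 + b + k) := by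
        nlinarith [mul_nonneg hm hm, hm]
      have hfinal := mul_pos (sub_pos.mpr hab) hQ
      rw [sub_nonneg, div_sub_div _ _ p3.ne' p4.ne', div_sub_div _ _ p1.ne' p2.ne',
        div_le_div_iff₀ (by positivity) (by positivity)]
      nlinarith [hfinal]
    have hsplit : ∑ k ∈ Finset.range n,
        ((1 / (1 + a + k) - 1 / (1 + b + k)) - (1 / (1 + a / 2 + k) - 1 / (1 + b / 2 + k)))
        = (∑ k ∈ Finset.range n, 1 / (1 + a + k)) - (∑ k ∈ Finset.range n, 1 / (1 + b + k))
          - ((∑ k ∈ Finset.range n, 1 / (1 + a / 2 + k))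
            - (∑ k ∈ Finset.range n, 1 / (1 + b / 2 + k))) := by
      simp [Finset.sum_sub_distrib]
    rw [hsplit] at hsum
    simp only [hR, hD]
    linarith [e1, e2, e3, e4]
  -- R tends to 0
  have hRt : Tendsto R atTop (𝓝 0) := by
    have hU : ∀ n : ℕ, R n ≤ 1 / (1 + a + n) + 1 / (1 + a + n + 1) := by
      intro n
      have hm : (0:ℝ) ≤ n := Nat.cast_nonneg n
      have b1 := digamma_diff_bound (x := 1 + a + n) (y := 1 + b + n)
        (by linarith) (by linarith) (by linarith)
      have b2 := digamma_diff_bound (x := 1 + a / 2 + n) (y := 1 + b / 2 + n)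
        (by linarith) (by linarith) (by linarith)
      simp only [hR]
      linarith [b1.1, b1.2, b2.1, b2.2]
    have hL : ∀ n : ℕ, -(1 / (1 + a / 2 + n) + 1 / (1 + a / 2 + n + 1)) ≤ R n := by
      intro n
      have hm : (0:ℝ) ≤ n := Nat.cast_nonneg n
      have b1 := digamma_diff_bound (x := 1 + a + n) (y := 1 + b + n)
        (by linarith) (by linarith) (by linarith)
      have b2 := digamma_diff_bound (x := 1 + a / 2 + n) (y := 1 + b / 2 + n)
        (by linarith) (by linarith) (by linarith)
      simp only [hR]
      linarith [b1.1, b1.2, b2.1, b2.2]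
    have tU : Tendsto (fun n : ℕ => 1 / (1 + a + n) + 1 / (1 + a + n + 1)) atTop (𝓝 0) := by
      have := (tendsto_aux (1 + a) (by linarith)).add (tendsto_aux (2 + a) (by linarith))
      simpa using this.congr (fun n => by ring_nf)
    have tL : Tendsto (fun n : ℕ => -(1 / (1 + a / 2 + n) + 1 / (1 + a / 2 + n + 1)))
        atTop (𝓝 0) := by
      have := ((tendsto_aux (1 + a / 2) (by linarith)).add
        (tendsto_aux (2 + a / 2) (by linarith))).neg
      simpa using this.congr (fun n => by ring_nf)
    exact tendsto_of_tendsto_of_tendsto_of_le_of_le tL tU hL hU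
  exact le_of_tendsto hRt (Filter.Eventually.of_forall hRD)

theorem stmt_16 :
    StrictMonoOn (fun α : ℝ => digamma (1 + α) - digamma (1 + α / 2) - 1 / (2 + α))
      (Set.Ioo (-1 : ℝ) 1) := by
  intro a ha b hb hab
  simp only
  have hk := key a b ha.1 hb.2 hab
  have h1 : (0:ℝ) < 2 + a := by linarith [ha.1]
  have h2 : (0:ℝ) < 2 + b := by linarith [hb.1]
  have h3 : 1 / (2 + b) < 1 / (2 + a) := by
    apply one_div_lt_one_div_of_lt h1; linarith
  linarith
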